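/- Let K be a commutative ring and A a K-module. On the direct sum ⊕_n C^n of the modules C^n of n-multilinear maps A^n → A, define for homogeneous f ∈ C^m and g ∈ C^n the bracket {f,g} := Σ_{i=1}^{m} f ∘_i g, where f ∘_i g denotes insertion of g into the i-th input of f, extended bilinearly. Then {-,-} satisfies the PreLie identity {{f,g},h} − {f,{g,h}} = {{f,h},g} − {f,{h,g}}. -/

import Mathlib

open DirectSum

/-- Insertion `f ∘_i g` of an `n`-ary operation `g` into the `i`-th input
(1-indexed) of an `m`-ary operation `f`, defined on underlying functions. -/
def ins {A : Type*} [Zero A] (m n : ℕ) (f : (Fin m → A) → A) (g : (Fin n → A) → A)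
    (i : ℕ) (x : Fin (m + n - 1) → A) : A :=
  let x' : ℕ → A := fun t => if h : t < m + n - 1 then x ⟨t, h⟩ else 0
  f fun j =>
    if (j : ℕ) + 1 < i then x' (j : ℕ)
    else if (j : ℕ) + 1 = i then g fun k => x' (i - 1 + (k : ℕ))
    else x' ((j : ℕ) + n - 1)

section Core
variable {A : Type*} [Zero A]

/-- `ins` with `ℕ`-indexed input vector (no truncation). -/
def insN (m n : ℕ) (f : (Fin m → A) → A) (g : (Fin n → A) → A) (i : ℕ) (y : ℕ → A) : A :=
  f fun j =>
    if (j : ℕ) + 1 < i then y (j : ℕ)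
    else if (j : ℕ) + 1 = i then g fun k => y (i - 1 + (k : ℕ))
    else y ((j : ℕ) + n - 1)

theorem ins_eq (m n : ℕ) (f : (Fin m → A) → A) (g : (Fin n → A) → A) (i : ℕ)
    (x : Fin (m + n - 1) → A) :
    ins m n f g i x = insN m n f g i (fun t => if h : t < m + n - 1 then x ⟨t, h⟩ else 0) := rfl

theorem insN_congr {m n : ℕ} {f : (Fin m → A) → A} {g : (Fin n → A) → A} {i : ℕ}
    (hi1 : 1 ≤ i) (him : i ≤ m) {y₁ y₂ : ℕ → A}
    (hy : ∀ t, t < m + n - 1 → y₁ t = y₂ t) :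
    insN m n f g i y₁ = insN m n f g i y₂ := by
  refine congrArg f (funext fun j => ?_)
  have hj := j.isLt
  split_ifs with h1 h2
  · exact hy _ (by omega)
  · exact congrArg g (funext fun k => hy _ (by have := k.isLt; omega))
  · exact hy _ (by omega)

theorem insN_ins {m n p : ℕ} {f : (Fin m → A) → A} {g : (Fin n → A) → A}
    {h : (Fin p → A) → A} {i q : ℕ} (hi1 : 1 ≤ i) (him : i ≤ m) (y : ℕ → A) :
    insN (m + n - 1) p (ins m n f g i) h q y
      = insN m n f g i (fun t =>
          if t + 1 < q then y t
          else if t + 1 = q then h (fun k => y (q - 1 + (k : ℕ)))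
          else y (t + p - 1)) := by
  rw [show insN (m + n - 1) p (ins m n f g i) h q y
      = ins m n f g i (fun j : Fin (m + n - 1) =>
          if (j : ℕ) + 1 < q then y (j : ℕ)
          else if (j : ℕ) + 1 = q then h (fun k => y (q - 1 + (k : ℕ)))
          else y ((j : ℕ) + p - 1)) from rfl]
  rw [ins_eq]
  refine insN_congr hi1 him fun t ht => ?_
  simp [ht]

theorem insN_def (m n : ℕ) (f : (Fin m → A) → A) (g : (Fin n → A) → A) (i : ℕ) (y : ℕ → A) :
    insN m n f g i y = f (fun j =>
      if (j : ℕ) + 1 < i then y (j : ℕ)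
      else if (j : ℕ) + 1 = i then g fun k => y (i - 1 + (k : ℕ))
      else y ((j : ℕ) + n - 1)) := rfl

theorem keyA {m n p : ℕ} {f : (Fin m → A) → A} {g : (Fin n → A) → A}
    {h : (Fin p → A) → A} {i j : ℕ} (hi1 : 1 ≤ i) (him : i ≤ m)
    (hj1 : 1 ≤ j) (hjn : j ≤ n) (y : ℕ → A) :
    insN (m + n - 1) p (ins m n f g i) h (i + j - 1) y
      = insN m (n + p - 1) f (ins n p g h j) i y := by
  have hmid : ins n p g h j (fun k : Fin (n + p - 1) => y (i - 1 + (k : ℕ)))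
      = insN n p g h j (fun t => y (i - 1 + t)) := by
    rw [ins_eq]
    exact insN_congr hj1 hjn fun t ht => by simp [ht]
  rw [insN_ins hi1 him]
  refine congrArg f (funext fun a => ?_)
  have ha := a.isLt
  dsimp only
  split_ifs <;>
    first
      | exact congrArg y (by omega)
      | (exfalso; omega)
      | exact congrArg h (funext fun l => congrArg y (by omega))
      | (rw [hmid, insN_def]
         refine congrArg g (funext fun k => ?_)
         have hk := k.isLt
         beta_reduce
         split_ifs <;>
           first
             | exact congrArg y (by omega)
             | (exfalso; omega)
             | exact congrArg h (funext fun l => congrArg y (by omega)))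

theorem keyB {m n p : ℕ} {f : (Fin m → A) → A} {g : (Fin n → A) → A}
    {h : (Fin p → A) → A} {a b : ℕ} (ha1 : 1 ≤ a) (hab : a < b) (hbm : b ≤ m) (y : ℕ → A) :
    insN (m + n - 1) p (ins m n f g a) h (b + n - 1) y
      = insN (m + p - 1) n (ins m p f h b) g a y := by
  rw [insN_ins ha1 (by omega), insN_ins (show 1 ≤ b by omega) hbm]
  refine congrArg f (funext fun c => ?_)
  have hc := c.isLt
  dsimp only
  split_ifs <;>
    first
      | exact congrArg y (by omega)
      | (exfalso; omega)
      | exact congrArg h (funext fun l => by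
          have hl := l.isLt
          beta_reduce
          split_ifs <;>
            first
              | exact congrArg y (by omega)
              | (exfalso; omega)
              | exact congrArg g (funext fun k => congrArg y (by omega)))
      | exact congrArg g (funext fun k => by
          have hk := k.isLt
          beta_reduce
          split_ifs <;>
            first
              | exact congrArg y (by omega)
              | (exfalso; omega)
              | exact congrArg h (funext fun l => congrArg y (by omega)))

end Core

theorem of_congr {K A : Type*} [CommRing K] [AddCommGroup A] [Module K A]
    {q q' : ℕ} (hq : q = q')
    (c : MultilinearMap K (fun _ : Fin q => A) A)
    (c' : MultilinearMap K (fun _ : Fin q' => A) A)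
    (hcc : ∀ y : ℕ → A, c (fun t => y t) = c' (fun t => y t)) :
    DirectSum.of (fun k => MultilinearMap K (fun _ : Fin k => A) A) q c
      = DirectSum.of (fun k => MultilinearMap K (fun _ : Fin k => A) A) q' c' := by
  subst hq
  congr 1
  refine MultilinearMap.ext fun x => ?_
  have h := hcc (fun t => if ht : t < q then x ⟨t, ht⟩ else 0)
  simpa using h

/-- on the direct sum `⊕_n C^n` of the modules of multilinear maps
`A^n → A`, the bracket `{f,g} = Σ_{i=1}^m f ∘_i g` (for homogeneous `f ∈ C^m`),
extended bilinearly, satisfies the PreLie identity. -/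
theorem stmt_7 (K A : Type*) [CommRing K] [AddCommGroup A] [Module K A]
    (comp : ∀ m n : ℕ, MultilinearMap K (fun _ : Fin m => A) A →
      MultilinearMap K (fun _ : Fin n => A) A → ℕ →
      MultilinearMap K (fun _ : Fin (m + n - 1) => A) A)
    (hcomp : ∀ (m n : ℕ) (f : MultilinearMap K (fun _ : Fin m => A) A)
        (g : MultilinearMap K (fun _ : Fin n => A) A) (i : ℕ), 1 ≤ i → i ≤ m →
      ∀ x, comp m n f g i x = ins m n ⇑f ⇑g i x)
    (B : (⨁ n, MultilinearMap K (fun _ : Fin n => A) A) →ₗ[K]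
         (⨁ n, MultilinearMap K (fun _ : Fin n => A) A) →ₗ[K]
         (⨁ n, MultilinearMap K (fun _ : Fin n => A) A))
    (hB : ∀ (m n : ℕ) (f : MultilinearMap K (fun _ : Fin m => A) A)
        (g : MultilinearMap K (fun _ : Fin n => A) A),
      B (DirectSum.of (fun k => MultilinearMap K (fun _ : Fin k => A) A) m f)
          (DirectSum.of (fun k => MultilinearMap K (fun _ : Fin k => A) A) n g)
        = DirectSum.of (fun k => MultilinearMap K (fun _ : Fin k => A) A) (m + n - 1)
            (∑ i ∈ Finset.Icc 1 m, comp m n f g i)) :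
    ∀ F G H : ⨁ n, MultilinearMap K (fun _ : Fin n => A) A,
      B (B F G) H - B F (B G H) = B (B F H) G - B F (B H G) := by
  classical
  have compv : ∀ (m n : ℕ) (f : MultilinearMap K (fun _ : Fin m => A) A)
      (g : MultilinearMap K (fun _ : Fin n => A) A) (i : ℕ), 1 ≤ i → i ≤ m →
      ∀ y : ℕ → A, comp m n f g i (fun t => y (t : ℕ)) = insN m n ⇑f ⇑g i y := by
    intro m n f g i h1 h2 y
    rw [hcomp m n f g i h1 h2, ins_eq]
    exact insN_congr h1 h2 fun t ht => by simp [ht]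
  have key : ∀ (m n p : ℕ) (f : MultilinearMap K (fun _ : Fin m => A) A)
      (g : MultilinearMap K (fun _ : Fin n => A) A)
      (h : MultilinearMap K (fun _ : Fin p => A) A),
      B (B (DirectSum.of (fun k => MultilinearMap K (fun _ : Fin k => A) A) m f) (DirectSum.of (fun k => MultilinearMap K (fun _ : Fin k => A) A) n g)) (DirectSum.of (fun k => MultilinearMap K (fun _ : Fin k => A) A) p h)
        - B (DirectSum.of (fun k => MultilinearMap K (fun _ : Fin k => A) A) m f) (B (DirectSum.of (fun k => MultilinearMap K (fun _ : Fin k => A) A) n g) (DirectSum.of (fun k => MultilinearMap K (fun _ : Fin k => A) A) p h))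
      = B (B (DirectSum.of (fun k => MultilinearMap K (fun _ : Fin k => A) A) m f) (DirectSum.of (fun k => MultilinearMap K (fun _ : Fin k => A) A) p h)) (DirectSum.of (fun k => MultilinearMap K (fun _ : Fin k => A) A) n g)
        - B (DirectSum.of (fun k => MultilinearMap K (fun _ : Fin k => A) A) m f) (B (DirectSum.of (fun k => MultilinearMap K (fun _ : Fin k => A) A) p h) (DirectSum.of (fun k => MultilinearMap K (fun _ : Fin k => A) A) n g)) := by
    intro m n p f g h
    -- value-level identities lifted to the direct sum
    have valA : ∀ (n p : ℕ) (g : MultilinearMap K (fun _ : Fin n => A) A)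
        (h : MultilinearMap K (fun _ : Fin p => A) A) (i j : ℕ),
        1 ≤ i → i ≤ m → 1 ≤ j → j ≤ n →
        DirectSum.of (fun k => MultilinearMap K (fun _ : Fin k => A) A) (m + n - 1 + p - 1)
            (comp (m + n - 1) p (comp m n f g i) h (i + j - 1))
          = DirectSum.of (fun k => MultilinearMap K (fun _ : Fin k => A) A) (m + (n + p - 1) - 1)
              (comp m (n + p - 1) f (comp n p g h j) i) := by
      intro n p g h i j hi1 him hj1 hjn
      refine of_congr (by omega) _ _ fun y => ?_
      rw [compv (m + n - 1) p (comp m n f g i) h (i + j - 1) (by omega) (by omega) y,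
        compv m (n + p - 1) f (comp n p g h j) i hi1 him y,
        show ⇑(comp m n f g i) = ins m n ⇑f ⇑g i from funext (hcomp m n f g i hi1 him),
        show ⇑(comp n p g h j) = ins n p ⇑g ⇑h j from funext (hcomp n p g h j hj1 hjn)]
      exact keyA hi1 him hj1 hjn y
    have valB : ∀ (n p : ℕ) (g : MultilinearMap K (fun _ : Fin n => A) A)
        (h : MultilinearMap K (fun _ : Fin p => A) A) (i b : ℕ),
        1 ≤ i → i ≤ m → 1 ≤ b → b ≤ m → i ≠ b →
        DirectSum.of (fun k => MultilinearMap K (fun _ : Fin k => A) A) (m + n - 1 + p - 1)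
            (comp (m + n - 1) p (comp m n f g i) h (if b < i then b else b + n - 1))
          = DirectSum.of (fun k => MultilinearMap K (fun _ : Fin k => A) A) (m + p - 1 + n - 1)
              (comp (m + p - 1) n (comp m p f h b) g (if i < b then i else i + p - 1)) := by
      intro n p g h i b hi1 him hb1 hbm hib
      refine of_congr (by omega) _ _ fun y => ?_
      rcases lt_or_gt_of_ne hib with hlt | hgt
      · rw [if_neg (by omega), if_pos hlt,
          compv (m + n - 1) p (comp m n f g i) h (b + n - 1) (by omega) (by omega) y,
          compv (m + p - 1) n (comp m p f h b) g i (by omega) (by omega) y,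
          show ⇑(comp m n f g i) = ins m n ⇑f ⇑g i from funext (hcomp m n f g i hi1 him),
          show ⇑(comp m p f h b) = ins m p ⇑f ⇑h b from funext (hcomp m p f h b hb1 hbm)]
        exact keyB hi1 hlt hbm y
      · rw [if_pos hgt, if_neg (by omega),
          compv (m + n - 1) p (comp m n f g i) h b (by omega) (by omega) y,
          compv (m + p - 1) n (comp m p f h b) g (i + p - 1) (by omega) (by omega) y,
          show ⇑(comp m n f g i) = ins m n ⇑f ⇑g i from funext (hcomp m n f g i hi1 him),
          show ⇑(comp m p f h b) = ins m p ⇑f ⇑h b from funext (hcomp m p f h b hb1 hbm)]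
        exact (keyB hb1 hgt him y).symm
    -- splitting of the inner sum
    have split : ∀ (n p : ℕ) (g : MultilinearMap K (fun _ : Fin n => A) A)
        (h : MultilinearMap K (fun _ : Fin p => A) A) (i : ℕ), 1 ≤ i → i ≤ m →
        (∑ q ∈ Finset.Icc 1 (m + n - 1),
          DirectSum.of (fun k => MultilinearMap K (fun _ : Fin k => A) A) (m + n - 1 + p - 1)
            (comp (m + n - 1) p (comp m n f g i) h q))
        = (∑ j ∈ Finset.Icc 1 n,
            DirectSum.of (fun k => MultilinearMap K (fun _ : Fin k => A) A) (m + (n + p - 1) - 1)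
              (comp m (n + p - 1) f (comp n p g h j) i))
          + ∑ b ∈ Finset.Icc 1 m \ {i},
              DirectSum.of (fun k => MultilinearMap K (fun _ : Fin k => A) A) (m + n - 1 + p - 1)
                (comp (m + n - 1) p (comp m n f g i) h (if b < i then b else b + n - 1)) := by
      intro n p g h i hi1 him
      have hsub : Finset.Icc i (i + n - 1) ⊆ Finset.Icc 1 (m + n - 1) := by
        intro q hq
        simp only [Finset.mem_Icc] at *
        omega
      rw [← Finset.sum_sdiff hsub, add_comm]
      congr 1
      · refine Finset.sum_nbij' (fun q => q - i + 1) (fun j => i + j - 1) ?_ ?_ ?_ ?_ ?_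
        · intro q hq; simp only [Finset.mem_Icc] at *; omega
        · intro j hj; simp only [Finset.mem_Icc] at *; omega
        · intro q hq; simp only [Finset.mem_Icc] at hq; beta_reduce; omega
        · intro j hj; simp only [Finset.mem_Icc] at hj; beta_reduce; omega
        · intro q hq
          simp only [Finset.mem_Icc] at hq
          beta_reduce
          rw [← valA n p g h i (q - i + 1) hi1 him (by omega) (by omega),
            show i + (q - i + 1) - 1 = q by omega]
      · refine Finset.sum_nbij' (fun q => if q < i then q else q - n + 1)
          (fun b => if b < i then b else b + n - 1) ?_ ?_ ?_ ?_ ?_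
        · intro q hq
          simp only [Finset.mem_sdiff, Finset.mem_Icc, Finset.mem_singleton] at *
          split_ifs <;> omega
        · intro b hb
          simp only [Finset.mem_sdiff, Finset.mem_Icc, Finset.mem_singleton] at *
          split_ifs <;> omega
        · intro q hq
          simp only [Finset.mem_sdiff, Finset.mem_Icc, Finset.mem_singleton] at hq
          beta_reduce
          split_ifs <;> omega
        · intro b hb
          simp only [Finset.mem_sdiff, Finset.mem_Icc, Finset.mem_singleton] at hb
          beta_reduce
          split_ifs <;> omega
        · intro q hq
          simp only [Finset.mem_sdiff, Finset.mem_Icc, Finset.mem_singleton] at hq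
          beta_reduce
          rw [show (if (if q < i then q else q - n + 1) < i then (if q < i then q else q - n + 1)
              else (if q < i then q else q - n + 1) + n - 1) = q by split_ifs <;> omega]
    -- expansions of the four terms
    have E1 : B (B (DirectSum.of (fun k => MultilinearMap K (fun _ : Fin k => A) A) m f) (DirectSum.of (fun k => MultilinearMap K (fun _ : Fin k => A) A) n g)) (DirectSum.of (fun k => MultilinearMap K (fun _ : Fin k => A) A) p h)
        = ∑ i ∈ Finset.Icc 1 m, ∑ q ∈ Finset.Icc 1 (m + n - 1),
            DirectSum.of (fun k => MultilinearMap K (fun _ : Fin k => A) A) (m + n - 1 + p - 1)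
              (comp (m + n - 1) p (comp m n f g i) h q) := by
      simp only [hB, map_sum, LinearMap.coe_sum, Finset.sum_apply, LinearMap.sum_apply]
    have E2 : B (DirectSum.of (fun k => MultilinearMap K (fun _ : Fin k => A) A) m f) (B (DirectSum.of (fun k => MultilinearMap K (fun _ : Fin k => A) A) n g) (DirectSum.of (fun k => MultilinearMap K (fun _ : Fin k => A) A) p h))
        = ∑ i ∈ Finset.Icc 1 m, ∑ j ∈ Finset.Icc 1 n,
            DirectSum.of (fun k => MultilinearMap K (fun _ : Fin k => A) A) (m + (n + p - 1) - 1)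
              (comp m (n + p - 1) f (comp n p g h j) i) := by
      simp only [hB, map_sum, LinearMap.coe_sum, Finset.sum_apply, LinearMap.sum_apply]
      exact Finset.sum_comm
    have E3 : B (B (DirectSum.of (fun k => MultilinearMap K (fun _ : Fin k => A) A) m f) (DirectSum.of (fun k => MultilinearMap K (fun _ : Fin k => A) A) p h)) (DirectSum.of (fun k => MultilinearMap K (fun _ : Fin k => A) A) n g)
        = ∑ i ∈ Finset.Icc 1 m, ∑ q ∈ Finset.Icc 1 (m + p - 1),
            DirectSum.of (fun k => MultilinearMap K (fun _ : Fin k => A) A) (m + p - 1 + n - 1)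
              (comp (m + p - 1) n (comp m p f h i) g q) := by
      simp only [hB, map_sum, LinearMap.coe_sum, Finset.sum_apply, LinearMap.sum_apply]
    have E4 : B (DirectSum.of (fun k => MultilinearMap K (fun _ : Fin k => A) A) m f) (B (DirectSum.of (fun k => MultilinearMap K (fun _ : Fin k => A) A) p h) (DirectSum.of (fun k => MultilinearMap K (fun _ : Fin k => A) A) n g))
        = ∑ i ∈ Finset.Icc 1 m, ∑ j ∈ Finset.Icc 1 p,
            DirectSum.of (fun k => MultilinearMap K (fun _ : Fin k => A) A) (m + (p + n - 1) - 1)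
              (comp m (p + n - 1) f (comp p n h g j) i) := by
      simp only [hB, map_sum, LinearMap.coe_sum, Finset.sum_apply, LinearMap.sum_apply]
      exact Finset.sum_comm
    have D1 : B (B (DirectSum.of (fun k => MultilinearMap K (fun _ : Fin k => A) A) m f) (DirectSum.of (fun k => MultilinearMap K (fun _ : Fin k => A) A) n g)) (DirectSum.of (fun k => MultilinearMap K (fun _ : Fin k => A) A) p h)
        - B (DirectSum.of (fun k => MultilinearMap K (fun _ : Fin k => A) A) m f) (B (DirectSum.of (fun k => MultilinearMap K (fun _ : Fin k => A) A) n g) (DirectSum.of (fun k => MultilinearMap K (fun _ : Fin k => A) A) p h))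
        = ∑ i ∈ Finset.Icc 1 m, ∑ b ∈ Finset.Icc 1 m \ {i},
            DirectSum.of (fun k => MultilinearMap K (fun _ : Fin k => A) A) (m + n - 1 + p - 1)
              (comp (m + n - 1) p (comp m n f g i) h (if b < i then b else b + n - 1)) := by
      rw [E1, E2,
        Finset.sum_congr rfl (fun i hi => split n p g h i
          (by simp only [Finset.mem_Icc] at hi; omega)
          (by simp only [Finset.mem_Icc] at hi; omega)),
        Finset.sum_add_distrib, add_sub_cancel_left]
    have D2 : B (B (DirectSum.of (fun k => MultilinearMap K (fun _ : Fin k => A) A) m f) (DirectSum.of (fun k => MultilinearMap K (fun _ : Fin k => A) A) p h)) (DirectSum.of (fun k => MultilinearMap K (fun _ : Fin k => A) A) n g)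
        - B (DirectSum.of (fun k => MultilinearMap K (fun _ : Fin k => A) A) m f) (B (DirectSum.of (fun k => MultilinearMap K (fun _ : Fin k => A) A) p h) (DirectSum.of (fun k => MultilinearMap K (fun _ : Fin k => A) A) n g))
        = ∑ i ∈ Finset.Icc 1 m, ∑ b ∈ Finset.Icc 1 m \ {i},
            DirectSum.of (fun k => MultilinearMap K (fun _ : Fin k => A) A) (m + p - 1 + n - 1)
              (comp (m + p - 1) n (comp m p f h i) g (if b < i then b else b + p - 1)) := by
      rw [E3, E4,
        Finset.sum_congr rfl (fun i hi => split p n h g i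
          (by simp only [Finset.mem_Icc] at hi; omega)
          (by simp only [Finset.mem_Icc] at hi; omega)),
        Finset.sum_add_distrib, add_sub_cancel_left]
    rw [D1, D2]
    rw [Finset.sum_congr rfl (fun i hi => Finset.sum_congr rfl (fun b hb => valB n p g h i b
      (by simp only [Finset.mem_Icc] at hi; omega)
      (by simp only [Finset.mem_Icc] at hi; omega)
      (by simp only [Finset.mem_sdiff, Finset.mem_Icc, Finset.mem_singleton] at hb; omega)
      (by simp only [Finset.mem_sdiff, Finset.mem_Icc, Finset.mem_singleton] at hb; omega)
      (by simp only [Finset.mem_sdiff, Finset.mem_Icc, Finset.mem_singleton] at hb; omega)))]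
    exact Finset.sum_comm' (by
      intro x y
      simp only [Finset.mem_sdiff, Finset.mem_Icc, Finset.mem_singleton]
      omega)
  intro F G H
  induction F using DirectSum.induction_on with
  | zero => simp
  | add F₁ F₂ ih₁ ih₂ =>
    simp only [map_add, LinearMap.add_apply]
    have e := congrArg₂ (· + ·) ih₁ ih₂
    rw [sub_add_sub_comm, sub_add_sub_comm] at e
    exact e
  | of m f =>
    induction G using DirectSum.induction_on with
    | zero => simp
    | add G₁ G₂ ih₁ ih₂ =>
      simp only [map_add, LinearMap.add_apply]
      have e := congrArg₂ (· + ·) ih₁ ih₂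
      rw [sub_add_sub_comm, sub_add_sub_comm] at e
      exact e
    | of n g =>
      induction H using DirectSum.induction_on with
      | zero => simp
      | add H₁ H₂ ih₁ ih₂ =>
        simp only [map_add, LinearMap.add_apply]
        have e := congrArg₂ (· + ·) ih₁ ih₂
        rw [sub_add_sub_comm, sub_add_sub_comm] at e
        exact e
      | of p h => exact key m n p f g h
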